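/- Define g(x) := x² + x + 1 − e^x. Then g(x) > 0 for all x ∈ (0, 1.7932] and g(x) < 0 for all x ∈ [1.7933, ∞). -/

import Mathlib

open Real Finset

lemma exp_q_ub : Real.exp 0.4483 ≤ 1.5656484 := by
  have h := Real.exp_bound' (x := 0.4483) (by norm_num) (by norm_num) (n := 10) (by norm_num)
  refine h.trans ?_
  norm_num [Finset.sum_range_succ, Nat.factorial]

lemma exp_B : Real.exp 1.7932 < 6.0087 := by
  have h4 : (1.7932 : ℝ) = (4 : ℕ) * 0.4483 := by norm_num
  rw [h4, Real.exp_nat_mul]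
  calc Real.exp 0.4483 ^ 4 ≤ 1.5656484 ^ 4 :=
        pow_le_pow_left₀ (Real.exp_nonneg _) exp_q_ub 4
    _ < 6.0087 := by norm_num

lemma exp_q_lb : (1.5656874 : ℝ) ≤ Real.exp 0.448325 := by
  have h := Real.sum_le_exp_of_nonneg (x := 0.448325) (by norm_num) 10
  refine le_trans ?_ h
  norm_num [Finset.sum_range_succ, Nat.factorial]

lemma exp_C : (6.00923 : ℝ) < Real.exp 1.7933 := by
  have h4 : (1.7933 : ℝ) = (4 : ℕ) * 0.448325 := by norm_num
  rw [h4, Real.exp_nat_mul]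
  calc (6.00923 : ℝ) < 1.5656874 ^ 4 := by norm_num
    _ ≤ Real.exp 0.448325 ^ 4 := pow_le_pow_left₀ (by norm_num) exp_q_lb 4

lemma exp_A : Real.exp 1.25 < 3.5 := by
  have h := Real.exp_bound' (x := 0.3125) (by norm_num) (by norm_num) (n := 7) (by norm_num)
  have hU : Real.exp 0.3125 ≤ 1.366838 := by
    refine h.trans ?_
    norm_num [Finset.sum_range_succ, Nat.factorial]
  have h4 : (1.25 : ℝ) = (4 : ℕ) * 0.3125 := by norm_num
  rw [h4, Real.exp_nat_mul]
  calc Real.exp 0.3125 ^ 4 ≤ 1.366838 ^ 4 :=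
        pow_le_pow_left₀ (Real.exp_nonneg _) hU 4
    _ < 3.5 := by norm_num

lemma gderiv (y : ℝ) :
    HasDerivAt (fun x : ℝ => x ^ 2 + x + 1 - Real.exp x) (2 * y + 1 - Real.exp y) y := by
  have h1 : HasDerivAt (fun x : ℝ => x ^ 2 + x + 1)
      ((2 : ℕ) * y ^ (2 - 1) * 1 + 1) y := by
    exact (((hasDerivAt_id y).pow 2).add (hasDerivAt_id y)).add_const 1
  have h2 := h1.sub (Real.hasDerivAt_exp y)
  refine HasDerivAt.congr_deriv h2 ?_
  push_cast
  ring

/-- Let `g x = x² + x + 1 - exp x`. Then `g x > 0` for all `x ∈ (0, 1.7932]` and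
`g x < 0` for all `x ∈ [1.7933, ∞)`. -/
theorem stmt_12 :
    (∀ x : ℝ, x ∈ Set.Ioc (0 : ℝ) 1.7932 → 0 < x ^ 2 + x + 1 - Real.exp x) ∧
    (∀ x : ℝ, x ∈ Set.Ici (1.7933 : ℝ) → x ^ 2 + x + 1 - Real.exp x < 0) := by
  constructor
  · rintro x ⟨hx0, hx2⟩
    rcases le_or_gt x 1.25 with h | h
    · -- use strict monotonicity on [0, 1.25]
      have key : StrictMonoOn (fun x : ℝ => x ^ 2 + x + 1 - Real.exp x) (Set.Icc 0 1.25) := by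
        apply strictMonoOn_of_deriv_pos (convex_Icc 0 1.25)
        · exact (Continuous.continuousOn (by continuity))
        · intro y hy
          rw [interior_Icc] at hy
          rw [(gderiv y).deriv]
          obtain ⟨hy0, hy1⟩ := hy
          -- exp y < 1 + 2y by strict convexity of exp
          have hsc := strictConvexOn_exp.2 (Set.mem_univ (0 : ℝ)) (Set.mem_univ (1.25 : ℝ))
            (by norm_num) (show (0:ℝ) < 1 - 0.8 * y by nlinarith)
            (show (0:ℝ) < 0.8 * y by nlinarith)
            (show (1 - 0.8 * y) + 0.8 * y = 1 by ring)
          have heq : (1 - 0.8 * y) • (0 : ℝ) + (0.8 * y) • (1.25 : ℝ) = y := by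
            simp only [smul_eq_mul]; ring
          rw [heq] at hsc
          simp only [smul_eq_mul, Real.exp_zero] at hsc
          have hE := exp_A
          have hmul : (0.8 * y) * Real.exp 1.25 ≤ (0.8 * y) * 3.5 :=
            mul_le_mul_of_nonneg_left hE.le (by nlinarith)
          nlinarith [Real.exp_pos y]
      have h0 : (0 : ℝ) ∈ Set.Icc (0 : ℝ) 1.25 := by norm_num
      have hxm : x ∈ Set.Icc (0 : ℝ) 1.25 := ⟨hx0.le, h⟩
      have := key h0 hxm hx0
      simpa using this
    · -- chord bound on [1.25, 1.7932]
      set t : ℝ := (x - 1.25) / 0.5432 with ht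
      have h5432 : (0.5432 : ℝ) ≠ 0 := by norm_num
      have hxt : x = 1.25 + 0.5432 * t := by
        rw [ht]; field_simp; ring
      have ht0 : 0 < t := by
        rw [ht]; apply div_pos (by linarith) (by norm_num)
      have ht1 : t ≤ 1 := by
        rw [ht, div_le_one (by norm_num)]; linarith
      have hcv := convexOn_exp.2 (Set.mem_univ (1.25 : ℝ)) (Set.mem_univ (1.7932 : ℝ))
        (show (0:ℝ) ≤ 1 - t by linarith) (show (0:ℝ) ≤ t by linarith)
        (show (1 - t) + t = 1 by ring)
      have heq : (1 - t) • (1.25 : ℝ) + t • (1.7932 : ℝ) = x := by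
        simp only [smul_eq_mul]; rw [hxt]; ring
      rw [heq] at hcv
      simp only [smul_eq_mul] at hcv
      have hA' := exp_A
      have hB' := exp_B
      have hexp : Real.exp x ≤ (1 - t) * 3.5 + t * 6.0087 := by
        refine hcv.trans ?_
        have h1 : (1 - t) * Real.exp 1.25 ≤ (1 - t) * 3.5 :=
          mul_le_mul_of_nonneg_left hA'.le (by linarith)
        have h2 : t * Real.exp 1.7932 ≤ t * 6.0087 :=
          mul_le_mul_of_nonneg_left hB'.le (by linarith)
        linarith
      rw [hxt] at hexp ⊢
      nlinarith [hexp, sq_nonneg (1 - t), ht1, ht0]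
  · intro x hx
    simp only [Set.mem_Ici] at hx
    rcases le_or_gt x 3 with h3 | h3
    · have he : Real.exp x = Real.exp 1.7933 * Real.exp (x - 1.7933) := by
        rw [← Real.exp_add]; ring_nf
      have h1 : (1 : ℝ) + (x - 1.7933) ≤ Real.exp (x - 1.7933) := by
        have := Real.add_one_le_exp (x - 1.7933); linarith
      have hC' := exp_C
      have hlb : (6.00923 : ℝ) * (1 + (x - 1.7933)) ≤ Real.exp x := by
        rw [he]
        have h1' : (0:ℝ) ≤ 1 + (x - 1.7933) := by linarith
        calc (6.00923 : ℝ) * (1 + (x - 1.7933))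
            ≤ Real.exp 1.7933 * Real.exp (x - 1.7933) :=
              mul_le_mul hC'.le h1 h1' (Real.exp_nonneg _)
          _ = _ := rfl
      have hprod : (0:ℝ) ≤ (x - 1.7933) * (3 - x) :=
        mul_nonneg (by linarith) (by linarith)
      nlinarith [hlb, hprod]
    · have he : Real.exp x = Real.exp 3 * Real.exp (x - 3) := by
        rw [← Real.exp_add]; ring_nf
      have h20 : (20 : ℝ) < Real.exp 3 := by
        have h := Real.exp_one_gt_d9
        have h3' : Real.exp 3 = Real.exp 1 ^ 3 := by
          rw [← Real.exp_nat_mul]; norm_num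
        have hcube : (2.7182818283 : ℝ) ^ 3 ≤ Real.exp 1 ^ 3 :=
          pow_le_pow_left₀ (by norm_num) h.le 3
        rw [h3']
        nlinarith [hcube]
      have hq : ((1 : ℝ) + (x - 3) / 2) ^ 2 ≤ Real.exp (x - 3) := by
        have h1 := Real.add_one_le_exp ((x - 3) / 2)
        have h0 : (0:ℝ) ≤ 1 + (x - 3) / 2 := by linarith
        calc ((1 : ℝ) + (x - 3) / 2) ^ 2 ≤ Real.exp ((x - 3) / 2) ^ 2 :=
              pow_le_pow_left₀ h0 (by linarith) 2
          _ = Real.exp (x - 3) := by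
              rw [sq, ← Real.exp_add]; congr 1; ring
      have hlb : 20 * ((1 : ℝ) + (x - 3) / 2) ^ 2 ≤ Real.exp x := by
        rw [he]
        have hs : (0:ℝ) ≤ ((1 : ℝ) + (x - 3) / 2) ^ 2 := sq_nonneg _
        nlinarith [mul_le_mul h20.le hq hs (Real.exp_nonneg 3)]
      nlinarith [hlb]
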